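/- First-order consistency of the completely positive splitting scheme in finite dimension: there exists a constant C > 0 (depending on H and L_1,…,L_m) such that for every Δt ∈ [0,1] and every d×d complex matrix ρ, ‖exp(Δt·𝓛)(ρ) − ((I + Δt·G) ρ (I + Δt·G)ᴴ + Δt · Σⱼ Lⱼ ρ Lⱼᴴ)‖₁ ≤ C · Δt² · ‖ρ‖₁. -/

import Mathlib

open Matrix
open scoped ComplexOrder

attribute [local instance] Matrix.normedAddCommGroup Matrix.normedSpace

/-- The positive semidefinite square root of a matrix (defined to be `0` if the matrix is not
positive semidefinite). -/
noncomputable def matSqrt {d : ℕ} (A : Matrix (Fin d) (Fin d) ℂ) : Matrix (Fin d) (Fin d) ℂ :=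
  open scoped Classical in
  if h : A.PosSemidef then
    (h.1.eigenvectorUnitary : Matrix (Fin d) (Fin d) ℂ) *
      diagonal ((↑) ∘ (√·) ∘ h.1.eigenvalues) *
      (star h.1.eigenvectorUnitary : Matrix (Fin d) (Fin d) ℂ)
  else 0

/-- The trace norm `‖A‖₁ = Re (Tr √(AᴴA))` of a complex matrix. -/
noncomputable def traceNorm {d : ℕ} (A : Matrix (Fin d) (Fin d) ℂ) : ℝ :=
  (Matrix.trace (matSqrt (Aᴴ * A))).re

/-- The Lindbladian `𝓛(ρ) = −i(Hρ − ρH) + Σⱼ (Lⱼ ρ Lⱼᴴ − ½(LⱼᴴLⱼ ρ + ρ LⱼᴴLⱼ))` as a linear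
endomorphism of the space of `d×d` complex matrices. -/
noncomputable def lindbladEnd {d m : ℕ} (H : Matrix (Fin d) (Fin d) ℂ)
    (L : Fin m → Matrix (Fin d) (Fin d) ℂ) :
    Matrix (Fin d) (Fin d) ℂ →ₗ[ℂ] Matrix (Fin d) (Fin d) ℂ :=
  Complex.I • (LinearMap.mulRight ℂ H - LinearMap.mulLeft ℂ H)
    + ∑ j, ((LinearMap.mulRight ℂ ((L j)ᴴ)).comp (LinearMap.mulLeft ℂ (L j))
        - (2⁻¹ : ℂ) • (LinearMap.mulLeft ℂ ((L j)ᴴ * L j)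
            + LinearMap.mulRight ℂ ((L j)ᴴ * L j)))

instance instIsTopologicalRingMatrixCLM {d : ℕ} :
    IsTopologicalRing (Matrix (Fin d) (Fin d) ℂ →L[ℂ] Matrix (Fin d) (Fin d) ℂ) :=
  @NonUnitalSeminormedRing.toIsTopologicalRing _
    (ContinuousLinearMap.toSeminormedRing (𝕜 := ℂ)
      (E := Matrix (Fin d) (Fin d) ℂ)).toNonUnitalSeminormedRing

noncomputable instance instNormedRingMatrixCLM {d : ℕ} :
    NormedRing (Matrix (Fin d) (Fin d) ℂ →L[ℂ] Matrix (Fin d) (Fin d) ℂ) :=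
  ContinuousLinearMap.toNormedRing (𝕜 := ℂ) (E := Matrix (Fin d) (Fin d) ℂ)

noncomputable instance instNormedAlgebraMatrixCLM {d : ℕ} :
    NormedAlgebra ℂ (Matrix (Fin d) (Fin d) ℂ →L[ℂ] Matrix (Fin d) (Fin d) ℂ) :=
  ContinuousLinearMap.toNormedAlgebra (𝕜 := ℂ) (E := Matrix (Fin d) (Fin d) ℂ)

instance instCompleteSpaceMatrixCLM {d : ℕ} :
    @CompleteSpace (Matrix (Fin d) (Fin d) ℂ →L[ℂ] Matrix (Fin d) (Fin d) ℂ)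
      (instNormedRingMatrixCLM (d := d)).toMetricSpace.toPseudoMetricSpace.toUniformSpace :=
  haveI : SequentialSpace (Matrix (Fin d) (Fin d) ℂ) :=
    inferInstanceAs (SequentialSpace (Fin d → Fin d → ℂ))
  ContinuousLinearMap.instCompleteSpace (𝕜₁ := ℂ) (𝕜₂ := ℂ) (E := Matrix (Fin d) (Fin d) ℂ)
    (F := Matrix (Fin d) (Fin d) ℂ)

/-! ### Auxiliary lemmas -/

/-- Second-order Taylor remainder bound for the exponential in a Banach algebra. -/
lemma exp_remainder {𝔸 : Type*} [NormedRing 𝔸] [NormedAlgebra ℂ 𝔸] [CompleteSpace 𝔸] (x : 𝔸) :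
    ‖NormedSpace.exp x - 1 - x‖ ≤ ‖x‖ ^ 2 * Real.exp ‖x‖ := by
  have hs : Summable (fun n => (n.factorial⁻¹ : ℂ) • x ^ n) := NormedSpace.expSeries_summable' x
  have h2 := Summable.sum_add_tsum_nat_add 2 hs
  have hexp : NormedSpace.exp x = ∑' n : ℕ, (n.factorial⁻¹ : ℂ) • x ^ n := by
    rw [NormedSpace.exp_eq_tsum ℂ]
  have hfront : ∑ i ∈ Finset.range 2, (i.factorial⁻¹ : ℂ) • x ^ i = 1 + x := by
    simp [Finset.sum_range_succ]
  have key : NormedSpace.exp x - 1 - x = ∑' n : ℕ, ((n + 2).factorial⁻¹ : ℂ) • x ^ (n + 2) := by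
    rw [hexp, ← h2, hfront]; ring_nf; abel
  rw [key]
  have hsumm : Summable (fun n : ℕ => ‖x‖ ^ 2 * (‖x‖ ^ n / n.factorial)) :=
    (NormedSpace.expSeries_div_summable ‖x‖).mul_left _
  have hterm : ∀ n : ℕ, ‖((n + 2).factorial⁻¹ : ℂ) • x ^ (n + 2)‖
      ≤ ‖x‖ ^ 2 * (‖x‖ ^ n / n.factorial) := by
    intro n
    rw [norm_smul]
    have h1 : ‖(((n + 2).factorial : ℕ) : ℂ)⁻¹‖ = ((n + 2).factorial : ℝ)⁻¹ := by
      rw [norm_inv]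
      norm_cast
    calc ‖(((n+2).factorial : ℂ))⁻¹‖ * ‖x ^ (n+2)‖
        ≤ ((n + 2).factorial : ℝ)⁻¹ * ‖x‖ ^ (n + 2) := by
          rw [h1]
          exact mul_le_mul_of_nonneg_left (norm_pow_le' x (by omega)) (by positivity)
      _ ≤ (n.factorial : ℝ)⁻¹ * ‖x‖ ^ (n + 2) := by
          apply mul_le_mul_of_nonneg_right _ (by positivity)
          apply inv_anti₀ (by positivity)
          exact_mod_cast Nat.factorial_le (by omega)
      _ = ‖x‖ ^ 2 * (‖x‖ ^ n / n.factorial) := by ring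
  calc ‖∑' n : ℕ, ((n + 2).factorial⁻¹ : ℂ) • x ^ (n + 2)‖
      ≤ ∑' n : ℕ, (‖x‖ ^ 2 * (‖x‖ ^ n / n.factorial)) := by
        apply tsum_of_norm_bounded (hsumm.hasSum) hterm
    _ = ‖x‖ ^ 2 * Real.exp ‖x‖ := by
        rw [tsum_mul_left]
        congr 1
        rw [Real.exp_eq_exp_ℝ, NormedSpace.exp_eq_tsum_div]

lemma gram_entry {d : ℕ} (B : Matrix (Fin d) (Fin d) ℂ) (j k : Fin d) :
    (Bᴴ * B) j k = ∑ i, (starRingEnd ℂ) (B i j) * B i k := by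
  simp [Matrix.mul_apply, Matrix.conjTranspose_apply]

lemma gram_diag_re {d : ℕ} (B : Matrix (Fin d) (Fin d) ℂ) (j : Fin d) :
    ((Bᴴ * B) j j).re = ∑ i, ‖B i j‖ ^ 2 := by
  rw [gram_entry]
  rw [Complex.re_sum]
  congr 1; ext i
  rw [mul_comm, Complex.mul_conj']
  simp [← Complex.ofReal_pow]

/-- Cauchy–Schwarz entry bound for Gram matrices. -/
lemma gram_entry_sq {d : ℕ} (B : Matrix (Fin d) (Fin d) ℂ) (j k : Fin d) :
    ‖(Bᴴ * B) j k‖ ^ 2 ≤ ((Bᴴ * B) j j).re * ((Bᴴ * B) k k).re := by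
  rw [gram_entry, gram_diag_re, gram_diag_re]
  calc ‖∑ i, (starRingEnd ℂ) (B i j) * B i k‖ ^ 2
      ≤ (∑ i, ‖B i j‖ * ‖B i k‖) ^ 2 := by
        apply pow_le_pow_left₀ (norm_nonneg _)
        refine (norm_sum_le _ _).trans (le_of_eq ?_)
        congr 1; ext i; rw [norm_mul, RingHomIsometric.norm_map]
    _ ≤ (∑ i, ‖B i j‖ ^ 2) * ∑ i, ‖B i k‖ ^ 2 :=
        Finset.sum_mul_sq_le_sq_mul_sq _ _ _

lemma conj_diag_mul {d : ℕ} (U : unitary (Matrix (Fin d) (Fin d) ℂ)) (f g : Fin d → ℂ) :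
    ((U : Matrix (Fin d) (Fin d) ℂ) * diagonal f * (star U : Matrix (Fin d) (Fin d) ℂ)) *
      ((U : Matrix (Fin d) (Fin d) ℂ) * diagonal g * (star U : Matrix (Fin d) (Fin d) ℂ))
      = (U : Matrix (Fin d) (Fin d) ℂ) * diagonal (fun i => f i * g i) *
          (star U : Matrix (Fin d) (Fin d) ℂ) := by
  have hu : (star U : Matrix (Fin d) (Fin d) ℂ) * U = 1 := Unitary.coe_star_mul_self U
  calc _ = (U : Matrix (Fin d) (Fin d) ℂ) *
        (diagonal f * ((star U : Matrix (Fin d) (Fin d) ℂ) * U) * diagonal g) *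
          (star U : Matrix (Fin d) (Fin d) ℂ) := by simp only [Matrix.mul_assoc]
    _ = _ := by rw [hu, Matrix.mul_one, diagonal_mul_diagonal]

lemma psd_eq_ctm {d : ℕ} {S : Matrix (Fin d) (Fin d) ℂ} (hS : S.PosSemidef) :
    ∃ B : Matrix (Fin d) (Fin d) ℂ, S = Bᴴ * B := by
  set f : Fin d → ℂ := (↑) ∘ (√·) ∘ hS.1.eigenvalues with hf
  refine ⟨diagonal f * (star hS.1.eigenvectorUnitary : Matrix (Fin d) (Fin d) ℂ), ?_⟩
  have hDh : (diagonal f)ᴴ = diagonal f := by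
    rw [diagonal_conjTranspose]
    congr 1; funext i; simp [hf]
  conv_lhs => rw [hS.1.spectral_theorem, Unitary.conjStarAlgAut_apply]
  rw [Matrix.conjTranspose_mul, hDh, ← Matrix.star_eq_conjTranspose, star_star,
    ← Matrix.mul_assoc, Matrix.mul_assoc (hS.1.eigenvectorUnitary : Matrix (Fin d) (Fin d) ℂ)
      (diagonal f), diagonal_mul_diagonal]
  congr 3; funext i
  simp [hf, ← Complex.ofReal_mul, Real.mul_self_sqrt (hS.eigenvalues_nonneg i)]

lemma matSqrt_spec {d : ℕ} (A : Matrix (Fin d) (Fin d) ℂ) :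
    (matSqrt (Aᴴ * A)).PosSemidef ∧ matSqrt (Aᴴ * A) * matSqrt (Aᴴ * A) = Aᴴ * A := by
  have h := Matrix.posSemidef_conjTranspose_mul_self A
  rw [matSqrt, dif_pos h]
  refine ⟨?_, ?_⟩
  · have hD : (diagonal ((↑) ∘ (√·) ∘ h.1.eigenvalues) : Matrix (Fin d) (Fin d) ℂ).PosSemidef :=
      posSemidef_diagonal_iff.mpr (fun i => by
        simp only [Function.comp]; exact_mod_cast Real.sqrt_nonneg _)
    have := hD.mul_mul_conjTranspose_same (h.1.eigenvectorUnitary : Matrix (Fin d) (Fin d) ℂ)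
    exact this
  · rw [conj_diag_mul]
    conv_rhs => rw [h.1.spectral_theorem, Unitary.conjStarAlgAut_apply]
    congr 3; funext i
    simp [← Complex.ofReal_mul, Real.mul_self_sqrt (h.eigenvalues_nonneg i)]

lemma traceNorm_eq_sum {d : ℕ} (A : Matrix (Fin d) (Fin d) ℂ) :
    traceNorm A = ∑ i, ((matSqrt (Aᴴ * A)) i i).re := by
  rw [traceNorm, Matrix.trace, Complex.re_sum]
  rfl

lemma sq_norm_entry_le {d : ℕ} (A : Matrix (Fin d) (Fin d) ℂ) (i j : Fin d) :
    ‖A i j‖ ^ 2 ≤ ((Aᴴ * A) j j).re := by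
  rw [gram_diag_re]
  exact Finset.single_le_sum (f := fun k => ‖A k j‖ ^ 2) (fun k _ => by positivity)
    (Finset.mem_univ i)

lemma traceNorm_nonneg {d : ℕ} (A : Matrix (Fin d) (Fin d) ℂ) : 0 ≤ traceNorm A := by
  obtain ⟨hpsd, hsq⟩ := matSqrt_spec A
  obtain ⟨B, hB⟩ := psd_eq_ctm hpsd
  rw [traceNorm_eq_sum]
  apply Finset.sum_nonneg
  intro i _
  rw [hB, gram_diag_re]
  positivity

lemma norm_le_traceNorm {d : ℕ} (A : Matrix (Fin d) (Fin d) ℂ) : ‖A‖ ≤ traceNorm A := by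
  obtain ⟨hpsd, hsq⟩ := matSqrt_spec A
  obtain ⟨B, hB⟩ := psd_eq_ctm hpsd
  set S := matSqrt (Aᴴ * A) with hSdef
  set t := traceNorm A with ht
  have htnn : 0 ≤ t := traceNorm_nonneg A
  rw [Matrix.norm_le_iff htnn]
  intro i j
  have hdiag_le : ∀ k, (S k k).re ≤ t := by
    intro k
    rw [ht, traceNorm_eq_sum]
    exact Finset.single_le_sum (f := fun k => (S k k).re)
      (fun l _ => by simp only [hB, gram_diag_re]; positivity) (Finset.mem_univ k)
  have hSherm : Sᴴ = S := hpsd.1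
  have key : ‖A i j‖ ^ 2 ≤ t ^ 2 := by
    calc ‖A i j‖ ^ 2 ≤ ((Aᴴ * A) j j).re := sq_norm_entry_le A i j
      _ = ((Sᴴ * S) j j).re := by rw [hSherm, hsq]
      _ = ∑ k, ‖S k j‖ ^ 2 := gram_diag_re S j
      _ ≤ ∑ k, (S k k).re * (S j j).re := by
          apply Finset.sum_le_sum
          intro k _
          calc ‖S k j‖ ^ 2 = ‖(Bᴴ * B) k j‖ ^ 2 := by rw [← hB]
            _ ≤ ((Bᴴ * B) k k).re * ((Bᴴ * B) j j).re := gram_entry_sq B k j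
            _ = (S k k).re * (S j j).re := by rw [← hB]
      _ = (∑ k, (S k k).re) * (S j j).re := by rw [Finset.sum_mul]
      _ ≤ t * t := by
          apply mul_le_mul ?_ (hdiag_le j) ?_ htnn
          · rw [ht, traceNorm_eq_sum]
          · rw [hB, gram_diag_re]; positivity
      _ = t ^ 2 := (sq t).symm
  nlinarith [norm_nonneg (A i j)]

lemma traceNorm_le_norm {d : ℕ} (A : Matrix (Fin d) (Fin d) ℂ) :
    traceNorm A ≤ d * Real.sqrt d * ‖A‖ := by
  obtain ⟨hpsd, hsq⟩ := matSqrt_spec A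
  set S := matSqrt (Aᴴ * A) with hSdef
  have hSherm : Sᴴ = S := hpsd.1
  have hstep : ∀ i, (S i i).re ≤ Real.sqrt d * ‖A‖ := by
    intro i
    have h1 : (S i i).re ≤ ‖S i i‖ := Complex.re_le_norm _
    have h2 : ‖S i i‖ ^ 2 ≤ ((Aᴴ * A) i i).re := by
      calc ‖S i i‖ ^ 2 ≤ ((Sᴴ * S) i i).re := sq_norm_entry_le S i i
        _ = ((Aᴴ * A) i i).re := by rw [hSherm, hsq]
    have h3 : ((Aᴴ * A) i i).re ≤ d * ‖A‖ ^ 2 := by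
      rw [gram_diag_re]
      calc ∑ k, ‖A k i‖ ^ 2 ≤ ∑ _k : Fin d, ‖A‖ ^ 2 := by
            apply Finset.sum_le_sum
            intro k _
            exact pow_le_pow_left₀ (norm_nonneg _) (Matrix.norm_entry_le_entrywise_sup_norm A) 2
        _ = d * ‖A‖ ^ 2 := by simp [mul_comm]
    have h4 : ‖S i i‖ ≤ Real.sqrt d * ‖A‖ := by
      have : ‖S i i‖ ^ 2 ≤ (Real.sqrt d * ‖A‖) ^ 2 := by
        rw [mul_pow, Real.sq_sqrt (by positivity : (0:ℝ) ≤ (d:ℝ))]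
        exact h2.trans h3
      nlinarith [norm_nonneg (S i i), Real.sqrt_nonneg (d:ℝ), norm_nonneg A,
        mul_nonneg (Real.sqrt_nonneg (d:ℝ)) (norm_nonneg A)]
    exact h1.trans h4
  rw [traceNorm_eq_sum]
  calc ∑ i, (S i i).re ≤ ∑ _i : Fin d, Real.sqrt d * ‖A‖ := Finset.sum_le_sum fun i _ => hstep i
    _ = d * Real.sqrt d * ‖A‖ := by simp; ring

lemma lind_apply {d m : ℕ} (H : Matrix (Fin d) (Fin d) ℂ)
    (L : Fin m → Matrix (Fin d) (Fin d) ℂ) (ρ : Matrix (Fin d) (Fin d) ℂ) :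
    lindbladEnd H L ρ =
      (-Complex.I • H - (2⁻¹ : ℂ) • ∑ j, (L j)ᴴ * L j) * ρ
        + ρ * (Complex.I • H - (2⁻¹ : ℂ) • ∑ j, (L j)ᴴ * L j)
        + ∑ j, L j * ρ * (L j)ᴴ := by
  simp only [lindbladEnd, LinearMap.add_apply, LinearMap.smul_apply, LinearMap.sub_apply,
    LinearMap.mulRight_apply, LinearMap.mulLeft_apply, LinearMap.coe_sum, Finset.sum_apply,
    LinearMap.comp_apply]
  simp only [sub_mul, Matrix.mul_sub, Matrix.add_mul, Matrix.mul_add, Matrix.smul_mul,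
    Matrix.mul_smul, Finset.sum_mul, Finset.mul_sum, smul_sub, smul_add,
    Finset.sum_sub_distrib, Finset.sum_add_distrib, Finset.smul_sum, Matrix.mul_assoc]
  module

lemma GH_eq {d m : ℕ} (H : Matrix (Fin d) (Fin d) ℂ) (hH : H.IsHermitian)
    (L : Fin m → Matrix (Fin d) (Fin d) ℂ) :
    (-Complex.I • H - (2⁻¹ : ℂ) • ∑ j, (L j)ᴴ * L j)ᴴ
      = Complex.I • H - (2⁻¹ : ℂ) • ∑ j, (L j)ᴴ * L j := by
  have hQ : (∑ j, (L j)ᴴ * L j)ᴴ = ∑ j, (L j)ᴴ * L j := by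
    rw [Matrix.conjTranspose_sum]
    congr 1; ext j
    rw [Matrix.conjTranspose_mul, Matrix.conjTranspose_conjTranspose]
  rw [Matrix.conjTranspose_sub, Matrix.conjTranspose_smul, Matrix.conjTranspose_smul, hQ, hH.eq]
  simp

lemma scheme_expand {d : ℕ} (G K ρ : Matrix (Fin d) (Fin d) ℂ) (t : ℂ) :
    (1 + t • G) * ρ * (1 + t • K) = ρ + t • (G * ρ + ρ * K) + (t ^ 2) • (G * ρ * K) := by
  simp only [Matrix.add_mul, Matrix.mul_add, Matrix.one_mul, Matrix.mul_one, Matrix.smul_mul,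
    Matrix.mul_smul, smul_add, smul_smul]
  ring_nf
  module

set_option maxHeartbeats 1000000 in
/-- First-order consistency of the completely positive splitting scheme in finite dimension:
with `G = −iH − ½ Σⱼ LⱼᴴLⱼ`, there is a constant `C > 0` (depending on `H` and the `Lⱼ`) such
that for all `Δt ∈ [0,1]` and all `ρ`,
`‖exp(Δt 𝓛)(ρ) − ((I + Δt G) ρ (I + Δt G)ᴴ + Δt Σⱼ Lⱼ ρ Lⱼᴴ)‖₁ ≤ C Δt² ‖ρ‖₁`. -/
theorem stmt7 {d m : ℕ} (H : Matrix (Fin d) (Fin d) ℂ) (hH : H.IsHermitian)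
    (L : Fin m → Matrix (Fin d) (Fin d) ℂ) :
    ∃ C : ℝ, 0 < C ∧
      ∀ Δt : ℝ, 0 ≤ Δt → Δt ≤ 1 →
        ∀ ρ : Matrix (Fin d) (Fin d) ℂ,
          traceNorm
            ((NormedSpace.exp ((Δt : ℂ) •
                (LinearMap.toContinuousLinearMap (lindbladEnd H L)))) ρ
              - ((1 + (Δt : ℂ) • (-Complex.I • H - (2⁻¹ : ℂ) • ∑ j, (L j)ᴴ * L j)) * ρ *
                    (1 + (Δt : ℂ) • (-Complex.I • H - (2⁻¹ : ℂ) • ∑ j, (L j)ᴴ * L j))ᴴ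
                  + (Δt : ℂ) • ∑ j, L j * ρ * (L j)ᴴ))
          ≤ C * Δt ^ 2 * traceNorm ρ := by
  set G : Matrix (Fin d) (Fin d) ℂ := -Complex.I • H - (2⁻¹ : ℂ) • ∑ j, (L j)ᴴ * L j with hG
  set K : Matrix (Fin d) (Fin d) ℂ := Complex.I • H - (2⁻¹ : ℂ) • ∑ j, (L j)ᴴ * L j with hK
  set T := LinearMap.toContinuousLinearMap (lindbladEnd H L) with hT
  set M := LinearMap.toContinuousLinearMap
    ((LinearMap.mulLeft ℂ G).comp (LinearMap.mulRight ℂ K)) with hM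
  set c₀ : ℝ := ‖T‖ ^ 2 * Real.exp ‖T‖ + ‖M‖ with hc₀
  have hc₀nn : 0 ≤ c₀ := by positivity
  refine ⟨(d * Real.sqrt d) * c₀ + 1, by positivity, ?_⟩
  intro Δt h0 h1 ρ
  set t : ℂ := (Δt : ℂ) with htdef
  -- the scheme in closed form
  have hGH : (1 + t • G)ᴴ = 1 + t • K := by
    rw [Matrix.conjTranspose_add, Matrix.conjTranspose_one, Matrix.conjTranspose_smul]
    rw [hG, hK]
    rw [GH_eq H hH L]
    congr 1
    simp [htdef, Complex.conj_ofReal]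
  have hscheme :
      (1 + t • G) * ρ * (1 + t • G)ᴴ + t • ∑ j, L j * ρ * (L j)ᴴ
        = ρ + t • (lindbladEnd H L ρ) + (t ^ 2) • (G * ρ * K) := by
    rw [hGH, scheme_expand, lind_apply H L ρ, ← hG, ← hK, smul_add]
    module
  -- the main difference as remainder minus a second-order term
  have hdiff :
      (NormedSpace.exp (t • T)) ρ
          - ((1 + t • G) * ρ * (1 + t • G)ᴴ + t • ∑ j, L j * ρ * (L j)ᴴ)
        = (NormedSpace.exp (t • T) - 1 - t • T) ρ - (t ^ 2) • (M ρ) := by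
    rw [hscheme]
    have hMρ : M ρ = G * ρ * K := by
      simp [hM, Matrix.mul_assoc]
    have hTρ : T ρ = lindbladEnd H L ρ := rfl
    rw [hMρ]
    simp only [ContinuousLinearMap.sub_apply, ContinuousLinearMap.one_apply,
      ContinuousLinearMap.smul_apply, hTρ]
    module
  rw [hdiff]
  -- norm bounds
  have hnormt : ‖t‖ = Δt := by rw [htdef, Complex.norm_real, Real.norm_eq_abs, abs_of_nonneg h0]
  have hxnorm : ‖t • T‖ = Δt * ‖T‖ := by rw [show ‖t • T‖ = ‖t‖ * ‖T‖ from norm_smul t T, hnormt]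
  have hbound : ‖(NormedSpace.exp (t • T) - 1 - t • T) ρ - (t ^ 2) • (M ρ)‖
      ≤ Δt ^ 2 * c₀ * ‖ρ‖ := by
    calc ‖(NormedSpace.exp (t • T) - 1 - t • T) ρ - (t ^ 2) • (M ρ)‖
        ≤ ‖(NormedSpace.exp (t • T) - 1 - t • T) ρ‖ + ‖(t ^ 2) • (M ρ)‖ := norm_sub_le _ _
      _ ≤ ‖NormedSpace.exp (t • T) - 1 - t • T‖ * ‖ρ‖ + Δt ^ 2 * (‖M‖ * ‖ρ‖) := by
          apply add_le_add (ContinuousLinearMap.le_opNorm _ ρ)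
          rw [norm_smul, norm_pow, hnormt]
          exact mul_le_mul_of_nonneg_left (M.le_opNorm ρ) (by positivity)
      _ ≤ (‖t • T‖ ^ 2 * Real.exp ‖t • T‖) * ‖ρ‖ + Δt ^ 2 * (‖M‖ * ‖ρ‖) := by
          apply add_le_add_left
          exact mul_le_mul_of_nonneg_right (exp_remainder (t • T)) (norm_nonneg ρ)
      _ ≤ (Δt ^ 2 * (‖T‖ ^ 2 * Real.exp ‖T‖)) * ‖ρ‖ + Δt ^ 2 * (‖M‖ * ‖ρ‖) := by
          apply add_le_add_left
          apply mul_le_mul_of_nonneg_right _ (norm_nonneg ρ)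
          rw [hxnorm, mul_pow]
          rw [mul_assoc]
          apply mul_le_mul_of_nonneg_left _ (by positivity)
          apply mul_le_mul_of_nonneg_left _ (by positivity)
          apply Real.exp_le_exp.mpr
          calc Δt * ‖T‖ ≤ 1 * ‖T‖ := mul_le_mul_of_nonneg_right h1 (norm_nonneg T)
            _ = ‖T‖ := one_mul _
      _ = Δt ^ 2 * c₀ * ‖ρ‖ := by rw [hc₀]; ring
  calc traceNorm ((NormedSpace.exp (t • T) - 1 - t • T) ρ - (t ^ 2) • (M ρ))
      ≤ d * Real.sqrt d * ‖(NormedSpace.exp (t • T) - 1 - t • T) ρ - (t ^ 2) • (M ρ)‖ :=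
        traceNorm_le_norm _
    _ ≤ d * Real.sqrt d * (Δt ^ 2 * c₀ * ‖ρ‖) :=
        mul_le_mul_of_nonneg_left hbound (by positivity)
    _ ≤ d * Real.sqrt d * (Δt ^ 2 * c₀ * traceNorm ρ) := by
        apply mul_le_mul_of_nonneg_left _ (by positivity)
        exact mul_le_mul_of_nonneg_left (norm_le_traceNorm ρ) (by positivity)
    _ = (d * Real.sqrt d * c₀) * Δt ^ 2 * traceNorm ρ := by ring
    _ ≤ ((d * Real.sqrt d) * c₀ + 1) * Δt ^ 2 * traceNorm ρ := by
        apply mul_le_mul_of_nonneg_right _ (traceNorm_nonneg ρ)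
        apply mul_le_mul_of_nonneg_right _ (by positivity)
        linarith
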